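/- Let λ ∈ [1, ∞), β ∈ [0, 1), γ ∈ [0, 1] satisfy 1 − λ < β + 2γ < 1. Then there exists a constant C > 0 depending only on λ, β, γ such that for all a > 0 and b > 0, ∫_ℝ sin²(a x) · |x|^{-2+β} · min( b |x|^λ, 2 ) dx ≤ C · a^{2γ} · b^{(1 − β − 2γ)/λ}. -/

import Mathlib

open MeasureTheory

lemma my_integrable_comp_abs {f : ℝ → ℝ} (hf : IntegrableOn f (Set.Ioi 0)) :
    Integrable fun x => f |x| := by
  have h1 : IntegrableOn (fun x => f |x|) (Set.Ioi 0) :=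
    hf.congr_fun (fun x hx => by rw [abs_of_pos hx]) measurableSet_Ioi
  have h2 : IntegrableOn (fun x => f |x|) (Set.Iic 0) := by
    rw [← Measure.map_neg_eq_self (volume : Measure ℝ)]
    have m : MeasurableEmbedding fun x : ℝ => -x := (Homeomorph.neg ℝ).measurableEmbedding
    rw [m.integrableOn_map_iff]
    simp_rw [Function.comp_def, abs_neg, Set.neg_preimage, Set.neg_Iic, neg_zero]
    exact Iff.mpr integrableOn_Ici_iff_integrableOn_Ioi h1
  have h := h2.union h1
  rwa [Set.Iic_union_Ioi, integrableOn_univ] at h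

set_option maxHeartbeats 1000000 in
theorem stmt_10 (lam β γ : ℝ) (hlam : 1 ≤ lam) (hβ : β ∈ Set.Ico (0 : ℝ) 1)
    (hγ : γ ∈ Set.Icc (0 : ℝ) 1) (h1 : 1 - lam < β + 2 * γ) (h2 : β + 2 * γ < 1) :
    ∃ C : ℝ, 0 < C ∧ ∀ a b : ℝ, 0 < a → 0 < b →
      (∫ x : ℝ, Real.sin (a * x) ^ 2 * |x| ^ (-2 + β) * min (b * |x| ^ lam) 2) ≤
        C * a ^ (2 * γ) * b ^ ((1 - β - 2 * γ) / lam) := by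
  obtain ⟨hβ0, hβ1⟩ := hβ
  obtain ⟨hγ0, hγ1⟩ := hγ
  have hlam0 : (0 : ℝ) < lam := lt_of_lt_of_le one_pos hlam
  obtain ⟨p, hp_def⟩ : ∃ p : ℝ, p = -2 + β + 2 * γ := ⟨_, rfl⟩
  have hp : p < -1 := by rw [hp_def]; linarith
  have hpl : -1 < p + lam := by rw [hp_def]; linarith
  have hq : 1 - β - 2 * γ = -(p + 1) := by rw [hp_def]; ring
  obtain ⟨D, hD_def⟩ : ∃ D : ℝ, D = 2 / (p + lam + 1) + 2 / (1 - β - 2 * γ) := ⟨_, rfl⟩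
  have hD : (0 : ℝ) < D := by
    have e1 : (0:ℝ) < p + lam + 1 := by linarith
    have e2 : (0:ℝ) < 1 - β - 2 * γ := by linarith
    rw [hD_def]; positivity
  refine ⟨2 * D * 2 ^ ((β + 2 * γ - 1) / lam), by positivity, fun a b ha hb => ?_⟩
  obtain ⟨r, hr_def⟩ : ∃ r : ℝ, r = (2 / b) ^ lam⁻¹ := ⟨_, rfl⟩
  have hr : 0 < r := by rw [hr_def]; positivity
  have hrlam : r ^ lam = 2 / b := by
    rw [hr_def]; exact Real.rpow_inv_rpow (by positivity) hlam0.ne'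
  obtain ⟨G, hG_def⟩ : ∃ G : ℝ → ℝ, G = fun t => t ^ p * min (b * t ^ lam) 2 := ⟨_, rfl⟩
  -- integrability & value on (0, r]
  have heq1 : Set.EqOn (fun t : ℝ => b * t ^ (p + lam)) G (Set.Ioc 0 r) := by
    intro t ht
    have ht0 : (0:ℝ) < t := ht.1
    have htr : t ^ lam ≤ 2 / b := by
      rw [← hrlam]; exact Real.rpow_le_rpow ht0.le ht.2 hlam0.le
    have hmin : min (b * t ^ lam) 2 = b * t ^ lam := by
      refine min_eq_left ?_
      calc b * t ^ lam ≤ b * (2 / b) := by nlinarith [Real.rpow_nonneg ht0.le lam]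
        _ = 2 := by field_simp
    simp only [hG_def, hmin, Real.rpow_add ht0]; ring
  have hI1 : IntegrableOn G (Set.Ioc 0 r) := by
    have base0 : IntegrableOn (fun t : ℝ => t ^ (p + lam)) (Set.Ioc 0 r) :=
      (intervalIntegrable_iff_integrableOn_Ioc_of_le hr.le).mp
        (intervalIntegral.intervalIntegrable_rpow' hpl)
    have base : IntegrableOn (fun t : ℝ => b * t ^ (p + lam)) (Set.Ioc 0 r) :=
      base0.const_mul b
    exact IntegrableOn.congr_fun base heq1 measurableSet_Ioc
  have hval1 : ∫ t in Set.Ioc 0 r, G t = b * (r ^ (p + lam + 1) / (p + lam + 1)) := by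
    rw [← setIntegral_congr_fun measurableSet_Ioc heq1, ← intervalIntegral.integral_of_le hr.le,
      intervalIntegral.integral_const_mul, integral_rpow (Or.inl hpl),
      Real.zero_rpow (by linarith : p + lam + 1 ≠ 0)]
    ring
  -- integrability & value on (r, ∞)
  have heq2 : Set.EqOn (fun t : ℝ => t ^ p * 2) G (Set.Ioi r) := by
    intro t ht
    have htr : 2 / b ≤ t ^ lam := by
      rw [← hrlam]; exact Real.rpow_le_rpow hr.le (le_of_lt ht) hlam0.le
    have hmin : min (b * t ^ lam) 2 = 2 := by
      refine min_eq_right ?_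
      calc (2:ℝ) = b * (2 / b) := by field_simp
        _ ≤ b * t ^ lam := by nlinarith
    simp only [hG_def, hmin]
  have hI2 : IntegrableOn G (Set.Ioi r) := by
    have base : IntegrableOn (fun t : ℝ => t ^ p * 2) (Set.Ioi r) :=
      (integrableOn_Ioi_rpow_of_lt hp hr).mul_const 2
    exact IntegrableOn.congr_fun base heq2 measurableSet_Ioi
  have hval2 : ∫ t in Set.Ioi r, G t = -r ^ (p + 1) / (p + 1) * 2 := by
    rw [← setIntegral_congr_fun measurableSet_Ioi heq2, integral_mul_const,
      integral_Ioi_rpow_of_lt hp hr]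
  -- combine on (0, ∞)
  have hIoi : Set.Ioc 0 r ∪ Set.Ioi r = Set.Ioi (0:ℝ) := Set.Ioc_union_Ioi_eq_Ioi hr.le
  have hI : IntegrableOn G (Set.Ioi 0) := by rw [← hIoi]; exact hI1.union hI2
  have hvalD : ∫ t in Set.Ioi 0, G t = r ^ (p + 1) * D := by
    rw [← hIoi, setIntegral_union (Set.Ioc_disjoint_Ioi le_rfl) measurableSet_Ioi hI1 hI2,
      hval1, hval2]
    have e0 : r ^ (p + lam + 1) = r ^ (p + 1) * (2 / b) := by
      rw [← hrlam, ← Real.rpow_add hr]; congr 1; ring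
    rw [e0]
    generalize r ^ (p + 1) = R
    rw [hD_def, hq, div_neg]
    have hne1 : p + lam + 1 ≠ 0 := by linarith
    have hne2 : p + 1 ≠ 0 := by linarith
    field_simp
  -- value of r ^ (p+1)
  have hrval : r ^ (p + 1) = 2 ^ ((β + 2 * γ - 1) / lam) * b ^ ((1 - β - 2 * γ) / lam) := by
    have he : lam⁻¹ * (p + 1) = (β + 2 * γ - 1) / lam := by
      rw [hp_def, div_eq_mul_inv]; ring
    rw [hr_def, ← Real.rpow_mul (by positivity), he,
      Real.div_rpow (by norm_num : (0:ℝ) ≤ 2) hb.le, div_eq_mul_inv, ← Real.rpow_neg hb.le,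
      show -((β + 2 * γ - 1) / lam) = (1 - β - 2 * γ) / lam from by ring]
  -- pointwise a.e. bound
  have h0 : ∀ᵐ x : ℝ ∂volume, x ≠ 0 := by
    refine Filter.eventually_of_mem (U := {(0:ℝ)}ᶜ) ?_ fun x hx => hx
    rw [mem_ae_iff, compl_compl]; exact measure_singleton 0
  have hpt : ∀ᵐ x : ℝ ∂volume, Real.sin (a * x) ^ 2 * |x| ^ (-2 + β) * min (b * |x| ^ lam) 2
      ≤ a ^ (2 * γ) * G |x| := by
    filter_upwards [h0] with x hx
    have hx0 : 0 < |x| := abs_pos.mpr hx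
    have ht : 0 < a * |x| := by positivity
    have hsin : Real.sin (a * x) ^ 2 ≤ a ^ (2 * γ) * |x| ^ (2 * γ) := by
      have key : Real.sin (a * x) ^ 2 ≤ (a * |x|) ^ (2 * γ) := by
        rcases le_or_gt (a * |x|) 1 with hc | hc
        · have e1 : Real.sin (a * x) ^ 2 ≤ (a * |x|) ^ (2:ℕ) := by
            calc Real.sin (a * x) ^ 2 ≤ (a * x) ^ 2 := Real.sin_sq_le_sq
              _ = (a * |x|) ^ 2 := by rw [mul_pow, mul_pow, sq_abs]
          have e2 : (a * |x|) ^ ((2:ℕ):ℝ) ≤ (a * |x|) ^ (2 * γ) :=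
            Real.rpow_le_rpow_of_exponent_ge ht hc (by push_cast; linarith)
          calc Real.sin (a * x) ^ 2 ≤ (a * |x|) ^ (2:ℕ) := e1
            _ = (a * |x|) ^ ((2:ℕ):ℝ) := (Real.rpow_natCast _ 2).symm
            _ ≤ _ := e2
        · have e3 : (a * |x|) ^ (0:ℝ) ≤ (a * |x|) ^ (2 * γ) :=
            Real.rpow_le_rpow_of_exponent_le hc.le (by linarith)
          rw [Real.rpow_zero] at e3
          exact le_trans (by nlinarith [Real.sin_sq_le_one (a * x)]) e3
      calc Real.sin (a * x) ^ 2 ≤ (a * |x|) ^ (2 * γ) := key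
        _ = a ^ (2 * γ) * |x| ^ (2 * γ) := Real.mul_rpow ha.le (abs_nonneg x)
    have hminnn : 0 ≤ min (b * |x| ^ lam) 2 :=
      le_min (by positivity) (by norm_num)
    calc Real.sin (a * x) ^ 2 * |x| ^ (-2 + β) * min (b * |x| ^ lam) 2
        ≤ a ^ (2 * γ) * |x| ^ (2 * γ) * |x| ^ (-2 + β) * min (b * |x| ^ lam) 2 :=
          mul_le_mul_of_nonneg_right
            (mul_le_mul_of_nonneg_right hsin (Real.rpow_nonneg (abs_nonneg x) _)) hminnn
      _ = a ^ (2 * γ) * G |x| := by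
          have e4 : |x| ^ (2 * γ) * |x| ^ (-2 + β) = |x| ^ p := by
            rw [← Real.rpow_add hx0, hp_def]; ring_nf
          simp only [hG_def]
          rw [show a ^ (2 * γ) * |x| ^ (2 * γ) * |x| ^ (-2 + β) * min (b * |x| ^ lam) 2
              = a ^ (2 * γ) * ((|x| ^ (2 * γ) * |x| ^ (-2 + β)) * min (b * |x| ^ lam) 2) from
              by ring, e4]
  have hnn : ∀ᵐ x : ℝ ∂volume,
      0 ≤ Real.sin (a * x) ^ 2 * |x| ^ (-2 + β) * min (b * |x| ^ lam) 2 := by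
    refine Filter.Eventually.of_forall fun x => ?_
    have : 0 ≤ min (b * |x| ^ lam) 2 := le_min (by positivity) (by norm_num)
    have h2' : (0:ℝ) ≤ |x| ^ (-2 + β) := Real.rpow_nonneg (abs_nonneg x) _
    positivity
  calc (∫ x : ℝ, Real.sin (a * x) ^ 2 * |x| ^ (-2 + β) * min (b * |x| ^ lam) 2)
      ≤ ∫ x : ℝ, a ^ (2 * γ) * G |x| :=
        integral_mono_of_nonneg hnn ((my_integrable_comp_abs hI).const_mul _) hpt
    _ = a ^ (2 * γ) * ∫ x : ℝ, G |x| := integral_const_mul _ _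
    _ = a ^ (2 * γ) * (2 * (r ^ (p + 1) * D)) := by
        rw [integral_comp_abs (f := G), hvalD]
    _ = 2 * D * 2 ^ ((β + 2 * γ - 1) / lam) * a ^ (2 * γ) * b ^ ((1 - β - 2 * γ) / lam) := by
        rw [hrval]; ring
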